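/- Let p > 1, let N ≥ 2 be an integer, let α ∈ ℝ and let ω > α²/N². Define φ : [0,∞) → ℝ by φ(x) = (((p+1)ω/2)·sech²(((p−1)√ω/2)·x − arctanh(α/(N√ω))))^{1/(p−1)}. Then the virial identity holds: N·(∫₀^∞ φ'(x)² dx − ((p−1)/(2(p+1)))·∫₀^∞ φ(x)^{p+1} dx) + (α/2)·φ(0)² = 0. -/

import Mathlib

open MeasureTheory Real Set Filter Topology

/-- Inverse hyperbolic tangent. -/
noncomputable def arctanh (x : ℝ) : ℝ := Real.log ((1 + x) / (1 - x)) / 2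

lemma sinh_div_cosh_arctanh {y : ℝ} (h : |y| < 1) :
    Real.sinh (arctanh y) / Real.cosh (arctanh y) = y := by
  obtain ⟨h1, h2⟩ := abs_lt.1 h
  have hy1 : 0 < 1 - y := by linarith
  have hy2 : 0 < 1 + y := by linarith
  have hq : 0 < (1 + y) / (1 - y) := div_pos hy2 hy1
  have hE : 0 < Real.exp (arctanh y) := Real.exp_pos _
  have he : Real.exp (arctanh y) * Real.exp (arctanh y) * (1 - y) = 1 + y := by
    rw [← Real.exp_add, arctanh]
    rw [show Real.log ((1 + y) / (1 - y)) / 2 + Real.log ((1 + y) / (1 - y)) / 2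
        = Real.log ((1 + y) / (1 - y)) by ring]
    rw [Real.exp_log hq]
    field_simp
  rw [Real.sinh_eq, Real.cosh_eq, Real.exp_neg]
  rw [div_div_div_cancel_right₀]
  · field_simp
    nlinarith [he, hE]
  · positivity

/-- The profile `x ↦ C · sech²(a·x − b)`. -/
noncomputable def sch (C a b : ℝ) : ℝ → ℝ :=
  fun x => C * (1 / Real.cosh (a * x - b)) ^ 2

lemma sch_pos {C : ℝ} (hC : 0 < C) (a b x : ℝ) : 0 < sch C a b x := by
  have := Real.cosh_pos (a * x - b)
  unfold sch; positivity

lemma continuous_sch (C a b : ℝ) : Continuous (sch C a b) := by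
  unfold sch
  fun_prop (disch := intros; exact (Real.cosh_pos _).ne')

lemma hasDerivAt_lin (a b x : ℝ) : HasDerivAt (fun x : ℝ => a * x - b) a x := by
  simpa using ((hasDerivAt_id x).const_mul a).sub_const b

lemma hasDerivAt_sch (C a b x : ℝ) :
    HasDerivAt (sch C a b)
      (-(2 * a) * sch C a b x * (Real.sinh (a * x - b) / Real.cosh (a * x - b))) x := by
  have hch : Real.cosh (a * x - b) ≠ 0 := (Real.cosh_pos _).ne'
  have h1 : HasDerivAt (fun x : ℝ => Real.cosh (a * x - b))
      (Real.sinh (a * x - b) * a) x :=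
    (Real.hasDerivAt_cosh _).comp x (hasDerivAt_lin a b x)
  have h2 := (h1.inv hch).pow 2
  have h3 := h2.const_mul C
  have : (fun x : ℝ => C * ((Real.cosh (a * x - b))⁻¹) ^ 2) = sch C a b := by
    funext x; simp [sch, one_div]
  simp only [Pi.pow_apply, Pi.inv_apply] at h3
  rw [this] at h3
  refine h3.congr_deriv ?_
  unfold sch
  field_simp
  rw [show (2:ℕ) - 1 = 1 from rfl, pow_one, one_div, mul_inv_cancel_right₀ hch]
  push_cast
  ring

lemma hasDerivAt_sch_rpow {C : ℝ} (hC : 0 < C) (a b γ x : ℝ) :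
    HasDerivAt (fun x => sch C a b x ^ γ)
      (-(2 * a * γ) * sch C a b x ^ γ * (Real.sinh (a * x - b) / Real.cosh (a * x - b))) x := by
  have h := (hasDerivAt_sch C a b x).rpow_const (p := γ) (Or.inl (sch_pos hC a b x).ne')
  convert h using 1
  rw [Real.rpow_sub_one (sch_pos hC a b x).ne']
  field_simp [(sch_pos hC a b x).ne', (Real.cosh_pos (a * x - b)).ne']

lemma sch_le {C : ℝ} (hC : 0 < C) (a b x : ℝ) :
    sch C a b x ≤ 4 * C * Real.exp (2 * b) * Real.exp (-(2 * a) * x) := by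
  have hch : Real.exp (a * x - b) / 2 ≤ Real.cosh (a * x - b) := by
    rw [Real.cosh_eq]
    have := (Real.exp_pos (-(a * x - b))).le
    linarith
  have hchpos := Real.cosh_pos (a * x - b)
  have h1 : 1 / Real.cosh (a * x - b) ≤ 2 * Real.exp (-(a * x - b)) := by
    rw [div_le_iff₀ hchpos]
    have h2 : (0:ℝ) < 2 * Real.exp (-(a * x - b)) := by positivity
    calc (1:ℝ) = 2 * Real.exp (-(a * x - b)) * (Real.exp (a * x - b) / 2) := by
              rw [show (2:ℝ) * Real.exp (-(a * x - b)) * (Real.exp (a * x - b) / 2)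
                  = Real.exp (-(a * x - b)) * Real.exp (a * x - b) by ring,
                ← Real.exp_add]
              simp
      _ ≤ 2 * Real.exp (-(a * x - b)) * Real.cosh (a * x - b) := by gcongr
  have h0 : 0 ≤ 1 / Real.cosh (a * x - b) := by positivity
  have hsq : (1 / Real.cosh (a * x - b)) ^ 2 ≤ (2 * Real.exp (-(a * x - b))) ^ 2 := by
    gcongr
  unfold sch
  calc C * (1 / Real.cosh (a * x - b)) ^ 2 ≤ C * (2 * Real.exp (-(a * x - b))) ^ 2 := by gcongr
    _ = 4 * C * Real.exp (2 * b) * Real.exp (-(2 * a) * x) := by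
        rw [mul_pow, ← Real.exp_nat_mul,
          show ((2:ℕ):ℝ) * -(a * x - b) = 2 * b + -(2 * a) * x by push_cast; ring,
          Real.exp_add]
        ring

lemma sch_rpow_le {C : ℝ} (hC : 0 < C) (a b x : ℝ) {β : ℝ} (hβ : 0 ≤ β) :
    sch C a b x ^ β ≤ (4 * C * Real.exp (2 * b)) ^ β * Real.exp (-(2 * a * β) * x) := by
  have h1 : sch C a b x ^ β ≤ (4 * C * Real.exp (2 * b) * Real.exp (-(2 * a) * x)) ^ β :=
    Real.rpow_le_rpow (sch_pos hC a b x).le (sch_le hC a b x) hβ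
  refine h1.trans_eq ?_
  rw [Real.mul_rpow (by positivity) (Real.exp_pos _).le, ← Real.exp_mul]
  ring_nf

lemma integrableOn_of_expbound (f : ℝ → ℝ) (hf : Continuous f) (M k : ℝ) (hk : 0 < k)
    (h : ∀ x : ℝ, |f x| ≤ M * Real.exp (-k * x)) : IntegrableOn f (Set.Ioi 0) := by
  refine Integrable.mono' ((exp_neg_integrableOn_Ioi 0 hk).const_mul M)
    hf.aestronglyMeasurable.restrict (ae_of_all _ fun x => ?_)
  simpa [Real.norm_eq_abs] using h x

lemma tendsto_sch_rpow {C a : ℝ} (hC : 0 < C) (ha : 0 < a) (b : ℝ) {β : ℝ} (hβ : 0 < β) :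
    Tendsto (fun x => sch C a b x ^ β) atTop (𝓝 0) := by
  have hlim : Tendsto (fun x : ℝ => (4 * C * Real.exp (2 * b)) ^ β
      * Real.exp (-(2 * a * β) * x)) atTop (𝓝 0) := by
    have h1 : Tendsto (fun x : ℝ => Real.exp (-(2 * a * β) * x)) atTop (𝓝 0) := by
      have h2 : Tendsto (fun x : ℝ => (2 * a * β) * x) atTop atTop :=
        Tendsto.const_mul_atTop (mul_pos (mul_pos two_pos ha) hβ) tendsto_id
      have h3 := Real.tendsto_exp_neg_atTop_nhds_zero.comp h2
      simpa [Function.comp_def, neg_mul] using h3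
    simpa using h1.const_mul ((4 * C * Real.exp (2 * b)) ^ β)
  refine squeeze_zero (fun x => Real.rpow_nonneg (sch_pos hC a b x).le β)
    (fun x => sch_rpow_le hC a b x hβ.le) hlim

lemma abs_sinh_div_cosh_le_one (t : ℝ) : |Real.sinh t / Real.cosh t| ≤ 1 := by
  have hch := Real.cosh_pos t
  have hsq := Real.cosh_sq_sub_sinh_sq t
  rw [abs_div, abs_of_pos hch, div_le_one hch]
  nlinarith [abs_nonneg (Real.sinh t), sq_abs (Real.sinh t)]

/-- The ground-state profile of the NLS-δ equation on a star graph with `N` edges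
satisfies the virial identity `N·(∫φ'² − ((p−1)/(2(p+1)))∫φ^{p+1}) + (α/2)·φ(0)² = 0`. -/
theorem ground_state_virial_identity (p : ℝ) (hp : 1 < p) (N : ℕ) (hN : 2 ≤ N)
    (α ω : ℝ) (hω : α ^ 2 / (N : ℝ) ^ 2 < ω)
    (φ : ℝ → ℝ)
    (hφ : φ = fun x : ℝ => ((p + 1) * ω / 2 *
      (1 / Real.cosh ((p - 1) * Real.sqrt ω / 2 * x
        - arctanh (α / ((N : ℝ) * Real.sqrt ω)))) ^ 2) ^ (1 / (p - 1))) :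
    (N : ℝ) * ((∫ x in Set.Ioi (0 : ℝ), (deriv φ x) ^ 2)
        - (p - 1) / (2 * (p + 1)) * (∫ x in Set.Ioi (0 : ℝ), φ x ^ (p + 1)))
      + α / 2 * (φ 0) ^ 2 = 0 := by
  have hp1 : (0:ℝ) < p - 1 := by linarith
  have hp2 : (0:ℝ) < p + 1 := by linarith
  have hN0 : (0:ℝ) < (N:ℝ) := by
    have h2 : (2:ℝ) ≤ (N:ℝ) := by exact_mod_cast hN
    linarith
  have hω0 : 0 < ω := lt_of_le_of_lt (by positivity) hω
  set s : ℝ := Real.sqrt ω with hs_def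
  have hs : 0 < s := Real.sqrt_pos.mpr hω0
  have hsq : s ^ 2 = ω := Real.sq_sqrt hω0.le
  set y : ℝ := α / (↑N * s) with hy_def
  have hy : |y| < 1 := by
    rw [← sq_lt_one_iff_abs_lt_one, hy_def, div_pow,
      div_lt_one (pow_pos (mul_pos hN0 hs) 2), mul_pow, hsq]
    rw [div_lt_iff₀ (pow_pos hN0 2)] at hω
    nlinarith [hω]
  set b : ℝ := arctanh y with hb_def
  set a : ℝ := (p - 1) * s / 2 with ha_def
  have ha : 0 < a := div_pos (mul_pos hp1 hs) two_pos
  set C : ℝ := (p + 1) * ω / 2 with hC_def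
  have hC : 0 < C := div_pos (mul_pos hp2 hω0) two_pos
  have hφx : φ = fun x => sch C a b x ^ (1 / (p - 1)) := by rw [hφ]; rfl
  have hschpos : ∀ x, 0 < sch C a b x := fun x => sch_pos hC a b x
  have h2a : 2 * a * (1 / (p - 1)) = s := by rw [ha_def]; field_simp
  have h2a2 : 2 * a * (2 / (p - 1)) = 2 * s := by rw [ha_def]; field_simp
  -- derivative of φ
  have hderiv : ∀ x, HasDerivAt φ
      (-s * sch C a b x ^ (1 / (p - 1))
        * (Real.sinh (a * x - b) / Real.cosh (a * x - b))) x := by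
    intro x
    rw [hφx]
    have h := hasDerivAt_sch_rpow hC a b (1 / (p - 1)) x
    rwa [h2a] at h
  have hderiv_eq : deriv φ = fun x =>
      -s * sch C a b x ^ (1 / (p - 1))
        * (Real.sinh (a * x - b) / Real.cosh (a * x - b)) :=
    funext fun x => (hderiv x).deriv
  -- rpow algebra
  have e2 : ∀ x : ℝ, (sch C a b x ^ (1 / (p - 1))) ^ 2 = sch C a b x ^ (2 / (p - 1)) := by
    intro x
    rw [← Real.rpow_natCast (sch C a b x ^ (1 / (p - 1))) 2,
      ← Real.rpow_mul (hschpos x).le]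
    congr 1
    push_cast
    ring
  have e3 : ∀ x : ℝ, (sch C a b x ^ (1 / (p - 1))) ^ (p + 1)
      = sch C a b x ^ (2 / (p - 1)) * sch C a b x := by
    intro x
    rw [← Real.rpow_mul (hschpos x).le]
    rw [show 1 / (p - 1) * (p + 1) = 2 / (p - 1) + 1 by field_simp; ring]
    rw [Real.rpow_add (hschpos x), Real.rpow_one]
  -- continuity
  have hlin : Continuous (fun x : ℝ => a * x - b) :=
    (continuous_const.mul continuous_id).sub continuous_const
  have hcont_sch : Continuous (sch C a b) := continuous_sch C a b
  have hcont_T : Continuous (fun x : ℝ => Real.sinh (a * x - b) / Real.cosh (a * x - b)) :=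
    (Real.continuous_sinh.comp hlin).div (Real.continuous_cosh.comp hlin)
      fun x => (Real.cosh_pos _).ne'
  have hcont_Sγ : Continuous (fun x => sch C a b x ^ (1 / (p - 1))) :=
    hcont_sch.rpow_const fun x => Or.inl (hschpos x).ne'
  have hcont_dφ : Continuous (deriv φ) := by
    rw [hderiv_eq]
    exact (continuous_const.mul hcont_Sγ).mul hcont_T
  -- exponential bound for sch ^ (2/(p-1))
  have hSb : ∀ x : ℝ, sch C a b x ^ (2 / (p - 1))
      ≤ (4 * C * Real.exp (2 * b)) ^ (2 / (p - 1)) * Real.exp (-(2 * s) * x) := by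
    intro x
    have h := sch_rpow_le hC a b x (β := 2 / (p - 1)) (div_pos two_pos hp1).le
    rwa [h2a2] at h
  have hT2 : ∀ x : ℝ, (Real.sinh (a * x - b) / Real.cosh (a * x - b)) ^ 2 ≤ 1 := by
    intro x
    have h := abs_sinh_div_cosh_le_one (a * x - b)
    nlinarith [sq_abs (Real.sinh (a * x - b) / Real.cosh (a * x - b)),
      abs_nonneg (Real.sinh (a * x - b) / Real.cosh (a * x - b))]
  -- integrability of (deriv φ)²
  have hf_int : IntegrableOn (fun x => (deriv φ x) ^ 2) (Set.Ioi (0:ℝ)) := by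
    refine integrableOn_of_expbound _ (hcont_dφ.pow 2)
      (ω * (4 * C * Real.exp (2 * b)) ^ (2 / (p - 1))) (2 * s)
      (mul_pos two_pos hs) fun x => ?_
    rw [abs_of_nonneg (sq_nonneg _), hderiv_eq]
    simp only
    calc (-s * sch C a b x ^ (1 / (p - 1))
          * (Real.sinh (a * x - b) / Real.cosh (a * x - b))) ^ 2
        = s ^ 2 * (sch C a b x ^ (1 / (p - 1))) ^ 2
          * (Real.sinh (a * x - b) / Real.cosh (a * x - b)) ^ 2 := by ring
      _ = ω * sch C a b x ^ (2 / (p - 1))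
          * (Real.sinh (a * x - b) / Real.cosh (a * x - b)) ^ 2 := by rw [hsq, e2]
      _ ≤ ω * sch C a b x ^ (2 / (p - 1)) * 1 := by
          have h0 : 0 ≤ ω * sch C a b x ^ (2 / (p - 1)) :=
            mul_nonneg hω0.le (Real.rpow_nonneg (hschpos x).le _)
          exact mul_le_mul_of_nonneg_left (hT2 x) h0
      _ = ω * sch C a b x ^ (2 / (p - 1)) := mul_one _
      _ ≤ ω * ((4 * C * Real.exp (2 * b)) ^ (2 / (p - 1)) * Real.exp (-(2 * s) * x)) :=
          mul_le_mul_of_nonneg_left (hSb x) hω0.le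
      _ = ω * (4 * C * Real.exp (2 * b)) ^ (2 / (p - 1)) * Real.exp (-(2 * s) * x) := by ring
  -- integrability of φ ^ (p+1)
  have hβ' : (0:ℝ) < 1 / (p - 1) * (p + 1) := mul_pos (one_div_pos.mpr hp1) hp2
  have hg_eq : (fun x => φ x ^ (p + 1))
      = fun x => sch C a b x ^ (1 / (p - 1) * (p + 1)) := by
    funext x
    simp only [hφx]
    exact (Real.rpow_mul (hschpos x).le _ _).symm
  have hg_int : IntegrableOn (fun x => φ x ^ (p + 1)) (Set.Ioi (0:ℝ)) := by
    rw [hg_eq]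
    refine integrableOn_of_expbound _
      (hcont_sch.rpow_const fun x => Or.inl (hschpos x).ne')
      ((4 * C * Real.exp (2 * b)) ^ (1 / (p - 1) * (p + 1)))
      (2 * a * (1 / (p - 1) * (p + 1)))
      (mul_pos (mul_pos two_pos ha) hβ') fun x => ?_
    rw [abs_of_nonneg (Real.rpow_nonneg (hschpos x).le _)]
    exact sch_rpow_le hC a b x hβ'.le
  -- G tends to 0 at +∞
  have hGt : Tendsto (fun x => -(s / 2) * sch C a b x ^ (2 / (p - 1))
      * (Real.sinh (a * x - b) / Real.cosh (a * x - b))) atTop (𝓝 0) := by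
    have h1 : Tendsto (fun x => s / 2 * sch C a b x ^ (2 / (p - 1))) atTop (𝓝 0) := by
      have h := (tendsto_sch_rpow hC ha b (div_pos two_pos hp1)).const_mul (s / 2)
      simpa using h
    refine squeeze_zero_norm (fun x => ?_) h1
    rw [Real.norm_eq_abs, abs_mul, abs_mul, abs_neg,
      abs_of_pos (div_pos hs two_pos),
      abs_of_nonneg (Real.rpow_nonneg (hschpos x).le _)]
    have h0 : 0 ≤ s / 2 * sch C a b x ^ (2 / (p - 1)) :=
      mul_nonneg (div_pos hs two_pos).le (Real.rpow_nonneg (hschpos x).le _)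
    calc s / 2 * sch C a b x ^ (2 / (p - 1))
          * |Real.sinh (a * x - b) / Real.cosh (a * x - b)|
        ≤ s / 2 * sch C a b x ^ (2 / (p - 1)) * 1 :=
          mul_le_mul_of_nonneg_left (abs_sinh_div_cosh_le_one _) h0
      _ = s / 2 * sch C a b x ^ (2 / (p - 1)) := mul_one _
  -- derivative of the tanh factor
  have hT' : ∀ x : ℝ, HasDerivAt (fun x => Real.sinh (a * x - b) / Real.cosh (a * x - b))
      (a / Real.cosh (a * x - b) ^ 2) x := by
    intro x
    have h1 : HasDerivAt (fun x : ℝ => Real.sinh (a * x - b)) (Real.cosh (a * x - b) * a) x :=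
      (Real.hasDerivAt_sinh _).comp x (hasDerivAt_lin a b x)
    have h2 : HasDerivAt (fun x : ℝ => Real.cosh (a * x - b)) (Real.sinh (a * x - b) * a) x :=
      (Real.hasDerivAt_cosh _).comp x (hasDerivAt_lin a b x)
    have h3 := h1.div h2 (Real.cosh_pos _).ne'
    refine h3.congr_deriv ?_
    have hpyth := Real.cosh_sq_sub_sinh_sq (a * x - b)
    rw [div_left_inj' (pow_ne_zero 2 (Real.cosh_pos (a * x - b)).ne')]
    linear_combination a * hpyth
  -- G is an antiderivative of the virial integrand
  have hG : ∀ x : ℝ, HasDerivAt (fun x => -(s / 2) * sch C a b x ^ (2 / (p - 1))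
        * (Real.sinh (a * x - b) / Real.cosh (a * x - b)))
      ((deriv φ x) ^ 2 - (p - 1) / (2 * (p + 1)) * φ x ^ (p + 1)) x := by
    intro x
    have d1 := hasDerivAt_sch_rpow hC a b (2 / (p - 1)) x
    have d3 := (d1.mul (hT' x)).const_mul (-(s / 2))
    have heq : (fun x => -(s / 2) * (sch C a b x ^ (2 / (p - 1))
          * (Real.sinh (a * x - b) / Real.cosh (a * x - b))))
        = fun x => -(s / 2) * sch C a b x ^ (2 / (p - 1))
          * (Real.sinh (a * x - b) / Real.cosh (a * x - b)) := by
      funext x; ring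
    simp only [Pi.mul_apply] at d3
    rw [heq] at d3
    refine d3.congr_deriv ?_
    simp only [hderiv_eq]
    simp only [hφx]
    rw [e3 x, mul_pow, mul_pow, e2 x]
    have hchn : Real.cosh (a * x - b) ≠ 0 := (Real.cosh_pos _).ne'
    rw [show sch C a b x = C * (1 / Real.cosh (a * x - b)) ^ 2 from rfl]
    rw [ha_def, hC_def, ← hsq]
    field_simp
    ring
  -- put everything together
  have hint : IntegrableOn
      (fun x => (deriv φ x) ^ 2 - (p - 1) / (2 * (p + 1)) * φ x ^ (p + 1))
      (Set.Ioi (0:ℝ)) := hf_int.sub (hg_int.const_mul _)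
  have key := integral_Ioi_of_hasDerivAt_of_tendsto'
    (f := fun x => -(s / 2) * sch C a b x ^ (2 / (p - 1))
      * (Real.sinh (a * x - b) / Real.cosh (a * x - b)))
    (f' := fun x => (deriv φ x) ^ 2 - (p - 1) / (2 * (p + 1)) * φ x ^ (p + 1))
    (fun x _ => hG x) hint hGt
  rw [integral_sub hf_int (hg_int.const_mul _), integral_const_mul] at key
  rw [key]
  have hφ0 : φ 0 ^ 2 = sch C a b 0 ^ (2 / (p - 1)) := by
    simp only [hφx]; exact e2 0
  rw [hφ0]
  have hyb : Real.sinh b / Real.cosh b = y := by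
    rw [hb_def]; exact sinh_div_cosh_arctanh hy
  simp only [mul_zero, zero_sub, Real.sinh_neg, Real.cosh_neg, neg_div, mul_neg, neg_mul,
    neg_neg, sub_neg_eq_add, zero_add]
  rw [hyb, hy_def]
  field_simp
  ring
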